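/- Let θ = (α, 0, β₂) ∈ ℝ³ with α > 0 and αβ₂ = 1 (a global minimizer of L). Then the largest eigenvalue of H(θ) equals max{λ₁α², λ₂α² + λ₂β₂²}. -/

import Mathlib

noncomputable section

open Matrix

/-- Clip(x, c) = sign(x) * max {|x|, c}. -/
def Clip (x c : ℝ) : ℝ := Real.sign x * max |x| c

/-- Hessian of the loss at θ = (a, b1, b2). -/
def Hmat (l1 l2 a b1 b2 : ℝ) : Matrix (Fin 3) (Fin 3) ℝ :=
  !![l1 * b1 ^ 2 + l2 * b2 ^ 2, 2 * l1 * a * b1, 2 * l2 * a * b2 - l2;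
     2 * l1 * a * b1, l1 * a ^ 2, 0;
     2 * l2 * a * b2 - l2, 0, l2 * a ^ 2]

/-- Sharpness: the largest eigenvalue of a (symmetric) 3×3 real matrix. -/
def sharpness (M : Matrix (Fin 3) (Fin 3) ℝ) : ℝ :=
  sSup {mu : ℝ | ∃ v : Fin 3 → ℝ, v ≠ 0 ∧ M.mulVec v = mu • v}

/-- The loss L(a, b1, b2). -/
def Loss (l1 l2 a b1 b2 : ℝ) : ℝ :=
  (1 / 2) * l1 * (a * b1) ^ 2 + (1 / 2) * l2 * (a * b2 - 1) ^ 2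

/-- Membership in the initialization set X(η). -/
def InInit (l1 l2 eta a b1 b2 : ℝ) : Prop :=
  Real.sqrt (1.1 / (l1 * eta)) ≤ a ∧ a ≤ Real.sqrt (2 / (l1 * eta)) ∧
  max (max (Real.sqrt (6 * eta * l1) / 20) (3 / (20 * a))) a ≤ b2 ∧ b2 < 1 / a ∧
  (l2 * b2 / (500 * l1 * a)) * (1 - a * b2) ≤ b1 ^ 2 ∧
  b1 ^ 2 ≤ (l2 * b2 / (l1 * a)) * (1 - a * b2)

/-- The clipped gradient descent trajectory equations. -/
def IsTraj (l1 l2 eta : ℝ) (a b1 b2 : ℕ → ℝ) : Prop :=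
  ∀ t : ℕ,
    a (t + 1) = a t - eta * (l1 * (b1 t) ^ 2 * a t - l2 * b2 t * (1 - a t * b2 t)) ∧
    b1 (t + 1) = Clip ((1 - eta * l1 * (a t) ^ 2) * b1 t)
      (Real.sqrt 10 / (6 * Real.sqrt l1)) ∧
    b2 (t + 1) = b2 t + eta * l2 * a t * (1 - a t * b2 t)

/-- The projected (constrained) trajectory equations. -/
def IsProjTraj (l1 l2 eta : ℝ) (a b : ℕ → ℝ) : Prop :=
  ∀ t : ℕ,
    a (t + 1) = Clip (a t + eta * l2 * b t * (1 - a t * b t))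
      (Real.sqrt (2 / (eta * l1))) ∧
    b (t + 1) = b t + eta * l2 * a t * (1 - a t * b t)

theorem minimizer_sharpness_eq_max (l1 l2 a b2 : ℝ)
    (hl1 : 100 ≤ l1) (hl2 : 0 < l2) (hl : l1 * l2 ≤ 1)
    (ha : 0 < a) (hab : a * b2 = 1) :
    sharpness (Hmat l1 l2 a 0 b2) = max (l1 * a ^ 2) (l2 * a ^ 2 + l2 * b2 ^ 2) := by
  have hl1p : (0:ℝ) < l1 := lt_of_lt_of_le (by norm_num) hl1
  have hb2 : 0 < b2 := by nlinarith
  set T := l2 * a ^ 2 + l2 * b2 ^ 2 with hT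
  have hset : {mu : ℝ | ∃ v : Fin 3 → ℝ, v ≠ 0 ∧ (Hmat l1 l2 a 0 b2).mulVec v = mu • v}
      = {0, l1 * a ^ 2, T} := by
    ext mu
    simp only [Set.mem_setOf_eq, Set.mem_insert_iff, Set.mem_singleton_iff]
    constructor
    · rintro ⟨v, hv, hMv⟩
      by_contra hcon
      push_neg at hcon
      obtain ⟨h0, h1, h2⟩ := hcon
      have e0 := congrFun hMv 0
      have e1 := congrFun hMv 1
      have e2 := congrFun hMv 2
      simp [Hmat, Matrix.mulVec, dotProduct, Fin.sum_univ_three] at e0 e1 e2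
      have hv1 : v 1 = 0 := e1.resolve_left (fun h => h1 h.symm)
      have hv0 : v 0 = 0 := by
        have key : mu * (mu - T) * v 0 = 0 := by
          linear_combination (l2 * a ^ 2 - mu) * e0 - l2 * e2
            + (2*mu*l2*(v 2) + 2*l2^2*(v 0) - 2*l2^2*a^2*(v 2) - l2^2*(a*b2+1)*(v 0)) * hab
        rcases mul_eq_zero.1 key with h | h
        · rcases mul_eq_zero.1 h with h' | h'
          · exact absurd h' h0
          · exact absurd (by linarith) h2
        · exact h
      have hv2 : v 2 = 0 := by
        have hc : 2 * l2 * a * b2 - l2 = l2 := by linear_combination 2 * l2 * hab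
        rw [hc, hv0] at e0
        have : l2 * v 2 = 0 := by linarith
        exact (mul_eq_zero.1 this).resolve_left (ne_of_gt hl2)
      apply hv
      funext i; fin_cases i <;> assumption
    · rintro (rfl | rfl | rfl)
      · refine ⟨![a, 0, -b2], ?_, ?_⟩
        · intro h; have := congrFun h 0; simp at this; exact absurd this (ne_of_gt ha)
        · funext i; fin_cases i <;>
            simp [Hmat, Matrix.mulVec, dotProduct, Fin.sum_univ_three]
          · linear_combination (-l2 * b2) * hab
          · linear_combination (l2 * a) * hab
      · exact ⟨![0, 1, 0], by intro h; simpa using congrFun h 1, by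
          funext i; fin_cases i <;>
            simp [Hmat, Matrix.mulVec, dotProduct, Fin.sum_univ_three] <;> ring⟩
      · refine ⟨![b2, 0, a], ?_, ?_⟩
        · intro h; have := congrFun h 2; simp at this; exact absurd this (ne_of_gt ha)
        · funext i; fin_cases i <;>
            simp [Hmat, Matrix.mulVec, dotProduct, Fin.sum_univ_three]
          · linear_combination (l2 * a) * hab
          · linear_combination (l2*b2*(a*b2+1) - l2*a*b2 - l2*a*b2*(b2-1)) * hab
  rw [sharpness, hset]
  have hpair : sSup {l1 * a ^ 2, T} = max (l1 * a ^ 2) T := csSup_pair _ _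
  rw [show ({0, l1 * a ^ 2, T} : Set ℝ) = insert 0 {l1 * a ^ 2, T} from rfl,
    csSup_insert (Set.Finite.bddAbove (by simp)) ⟨l1 * a ^ 2, by simp⟩, hpair]
  have h0le : (0:ℝ) ≤ max (l1 * a ^ 2) T := le_max_of_le_left (by positivity)
  simp [max_eq_right h0le]
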